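/- Let λ be a finitely supported distribution on states of nature with n actions and ε ≥ 0, and fix K ≥ 1. Let F be any function that maps each K-tuple (θ_1,…,θ_K) of states to a direct signaling scheme on the indices {1,…,K} (i.e., F(θ_1,…,θ_K)(k) is a probability distribution over signals σ_1,…,σ_n for each k ∈ [K]) that is ε-incentive compatible for the uniform distribution on the multiset {θ_1,…,θ_K} (with r evaluated at θ_k for index k). Define the composed scheme φ: on input θ, draw ℓ uniformly from [K], draw θ_k ~ λ i.i.d. for all k ≠ ℓ, set θ_ℓ = θ, and output a signal drawn from F(θ_1,…,θ_K)(ℓ). Then φ is ε-incentive compatible for λ. -/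
import Mathlib


open Finset

namespace Persuasion

variable {Θ : Type*} [Fintype Θ] {n : ℕ}

/-- `μ` is a probability distribution on the finite type `Θ`. -/
def IsDist (μ : Θ → ℝ) : Prop := (∀ θ, 0 ≤ μ θ) ∧ ∑ θ, μ θ = 1

/-- a direct signaling scheme: a probability distribution over the `n` signals
(signal `i` recommending action `i`) for each state -/
def IsScheme (φ : Θ → Fin n → ℝ) : Prop :=
  (∀ θ i, 0 ≤ φ θ i) ∧ ∀ θ, ∑ i, φ θ i = 1

/-- `ε`-incentive compatibility of a direct scheme for the distribution `μ`
(`ε = 0` gives exact incentive compatibility) -/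
def EIC (μ : Θ → ℝ) (r : Θ → Fin n → ℝ) (ε : ℝ) (φ : Θ → Fin n → ℝ) : Prop :=
  ∀ i j : Fin n,
    ∑ θ, μ θ * φ θ i * (r θ j - ε) ≤ ∑ θ, μ θ * φ θ i * r θ i

/-- expected sender utility of a direct scheme under `μ`, assuming the receiver
follows the recommendations -/
def senderUtil (μ : Θ → ℝ) (s : Θ → Fin n → ℝ) (φ : Θ → Fin n → ℝ) : ℝ :=
  ∑ θ, ∑ i, μ θ * φ θ i * s θ i

end Persuasion

open Persuasion

namespace Persuasion

/-- the composed scheme of Algorithm 2: on input `θ`, draw `ℓ` uniformly from `[K]`,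
draw `θ_k ~ lam` i.i.d. for `k ≠ ℓ`, set `θ_ℓ = θ`, and output a signal drawn from
`F (θ_1, …, θ_K) ℓ`.  `composed lam F θ i` is the overall probability that signal `i`
is output on input `θ`. -/
noncomputable def composed {Θ : Type*} [Fintype Θ] [DecidableEq Θ] {n K : ℕ}
    (lam : Θ → ℝ) (F : (Fin K → Θ) → Fin K → Fin n → ℝ) (θ : Θ) (i : Fin n) : ℝ :=
  (1 / (K : ℝ)) * ∑ l : Fin K, ∑ v : Fin K → Θ,
    (if v l = θ then ∏ k ∈ Finset.univ.erase l, lam (v k) else 0) * F v l i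

end Persuasion


theorem Persuasion.composed_key
    {Θ : Type*} [Fintype Θ] [DecidableEq Θ] {n K : ℕ}
    (lam : Θ → ℝ) (F : (Fin K → Θ) → Fin K → Fin n → ℝ) (i : Fin n) (g : Θ → ℝ) :
    ∑ θ, lam θ * composed lam F θ i * g θ =
      ∑ v : Fin K → Θ, (∏ k, lam (v k)) *
        ((1 / (K : ℝ)) * ∑ l, F v l i * g (v l)) := by
  simp only [composed]
  have step : ∀ θ, lam θ * ((1 / (K : ℝ)) * ∑ l : Fin K, ∑ v : Fin K → Θ,
      (if v l = θ then ∏ k ∈ Finset.univ.erase l, lam (v k) else 0) * F v l i) * g θ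
      = ∑ l : Fin K, ∑ v : Fin K → Θ,
        (1 / (K : ℝ)) * ((if v l = θ then lam θ * (∏ k ∈ Finset.univ.erase l, lam (v k))
          * F v l i * g θ else 0)) := by
    intro θ
    rw [mul_comm (lam θ), mul_assoc, mul_assoc, Finset.sum_mul, Finset.mul_sum]
    refine Finset.sum_congr rfl fun l _ => ?_
    rw [Finset.sum_mul, Finset.mul_sum]
    refine Finset.sum_congr rfl fun v _ => ?_
    split <;> ring
  rw [Finset.sum_congr rfl fun θ _ => step θ]
  have rhs : ∀ v : Fin K → Θ, (∏ k, lam (v k)) * ((1 / (K : ℝ)) * ∑ l, F v l i * g (v l))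
      = ∑ l : Fin K, (1 / (K : ℝ)) * (lam (v l) * (∏ k ∈ Finset.univ.erase l, lam (v k))
          * F v l i * g (v l)) := by
    intro v
    rw [Finset.mul_sum, Finset.mul_sum]
    refine Finset.sum_congr rfl fun l _ => ?_
    rw [← Finset.mul_prod_erase Finset.univ (fun k => lam (v k)) (Finset.mem_univ l)]
    ring
  rw [Finset.sum_congr rfl fun v _ => rhs v]
  conv_lhs => rw [Finset.sum_comm]; enter [2, l]; rw [Finset.sum_comm]
  conv_lhs => rw [Finset.sum_comm]
  refine Finset.sum_congr rfl fun v _ => ?_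
  refine Finset.sum_congr rfl fun l _ => ?_
  rw [← Finset.mul_sum]
  congr 1
  rw [Finset.sum_ite_eq Finset.univ (v l)
    (fun θ => lam θ * (∏ k ∈ Finset.univ.erase l, lam (v k)) * F v l i * g θ)]
  simp

/-- if `F` maps every `K`-tuple of states to a direct scheme on the
indices `[K]` that is `ε`-incentive compatible for the uniform distribution on the
tuple, then the composed scheme is `ε`-incentive compatible for `lam`. -/
theorem composed_scheme_eic
    {Θ : Type*} [Fintype Θ] [DecidableEq Θ] {n K : ℕ} (hK : 1 ≤ K)
    (lam : Θ → ℝ) (hlam : IsDist lam)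
    (r : Θ → Fin n → ℝ) (ε : ℝ) (hε : 0 ≤ ε)
    (F : (Fin K → Θ) → Fin K → Fin n → ℝ)
    -- `F v` is a direct scheme on indices `[K]`:
    (hF : ∀ v k, (∀ i, 0 ≤ F v k i) ∧ ∑ i, F v k i = 1)
    -- which is `ε`-incentive compatible for the uniform distribution on the tuple `v`:
    (hFIC : ∀ v : Fin K → Θ, ∀ i j : Fin n,
      (1 / (K : ℝ)) * ∑ k, F v k i * (r (v k) j - ε) ≤
        (1 / (K : ℝ)) * ∑ k, F v k i * r (v k) i) :
    EIC lam r ε (composed lam F) := by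
  intro i j
  rw [Persuasion.composed_key lam F i (fun θ => r θ j - ε),
      Persuasion.composed_key lam F i (fun θ => r θ i)]
  refine Finset.sum_le_sum fun v _ => ?_
  exact mul_le_mul_of_nonneg_left (hFIC v i j)
    (Finset.prod_nonneg fun k _ => hlam.1 (v k))
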